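/- Let E be an ultrametric Banach space over a complete ultrametric field K, U ⊆ E open, f : U → E analytic, and p ∈ U a fixed point of f such that α := f'(p) is a bicontinuous linear automorphism of E. Then the following are equivalent: (a) E admits a centre subspace (with a = 1) with respect to α, and p is a uniformly attractive fixed point of f; (b) there exists an ultrametric norm on E defining its topology such that the operator norm of α with respect to it is < 1. -/

import Mathlib

open Filter Topology

/-- `N` is an ultrametric norm on the `K`-vector space `E`. -/
def IsUltraNorm (K : Type*) [NormedField K] {E : Type*} [AddCommGroup E] [Module K E]
    (N : E → ℝ) : Prop :=
  (∀ x : E, 0 ≤ N x) ∧ (∀ x : E, N x = 0 ↔ x = 0) ∧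
    (∀ (c : K) (x : E), N (c • x) = ‖c‖ * N x) ∧
    ∀ x y : E, N (x + y) ≤ max (N x) (N y)

/-- The norm `N` defines the canonical topology of `E`, i.e. it is equivalent
to the ambient norm. -/
def DefinesTopology {E : Type*} [NormedAddCommGroup E] (N : E → ℝ) : Prop :=
  ∃ c > 0, ∃ C > 0, ∀ x : E, c * ‖x‖ ≤ N x ∧ N x ≤ C * ‖x‖

/-- The fixed point `p ∈ U` of `f` is uniformly attractive: some neighbourhood `P ⊆ U` of
`p` consists of points whose forward orbits are defined and converge to `p`, and every
neighbourhood of `p` in `U` contains a neighbourhood `Q` of `p` with `f(Q) ⊆ Q`. -/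
def UniformlyAttractive {E : Type*} [TopologicalSpace E] (U : Set E) (f : E → E)
    (p : E) : Prop :=
  (∃ P, P ⊆ U ∧ P ∈ 𝓝 p ∧ (∀ x ∈ P, ∀ n : ℕ, f^[n] x ∈ U) ∧
    ∀ x ∈ P, Tendsto (fun n => f^[n] x) atTop (𝓝 p)) ∧
  ∀ P, P ⊆ U → P ∈ 𝓝 p → ∃ Q, Q ⊆ P ∧ Q ∈ 𝓝 p ∧ Set.MapsTo f Q Q

section Aux

variable {K : Type*} [NontriviallyNormedField K]
  {E : Type*} [NormedAddCommGroup E] [NormedSpace K E]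

lemma IsUltraNorm.zero' {N : E → ℝ} (hN : IsUltraNorm K N) : N 0 = 0 := by
  have h := hN.2.2.1 (0 : K) 0
  simpa using h

lemma IsUltraNorm.neg' {N : E → ℝ} (hN : IsUltraNorm K N) (x : E) : N (-x) = N x := by
  have h := hN.2.2.1 (-1 : K) x
  simpa using h

/-- Isosceles property: if `N b < N a` then `N (a + b) = N a`. -/
lemma IsUltraNorm.add_eq_left {N : E → ℝ} (hN : IsUltraNorm K N) {a b : E}
    (h : N b < N a) : N (a + b) = N a := by
  have h1 : N (a + b) ≤ N a := (hN.2.2.2 a b).trans (max_le le_rfl h.le)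
  have h2 : N a ≤ max (N (a + b)) (N b) := by
    have h3 := hN.2.2.2 (a + b) (-b)
    rw [add_neg_cancel_right, hN.neg' b] at h3
    exact h3
  rcases le_max_iff.mp h2 with h3 | h3
  · exact le_antisymm h1 h3
  · exact absurd h3 (not_le.mpr h)

/-- Consequence of differentiability: the remainder is small in the `N`-norm. -/
lemma key_estimate {f : E → E} {p : E} {α : E →L[K] E} (hα : HasFDerivAt f α p)
    (hfp : f p = p) {N : E → ℝ} {c C : ℝ} (hc : 0 < c) (hC : 0 < C)
    (hbound : ∀ x : E, c * ‖x‖ ≤ N x ∧ N x ≤ C * ‖x‖)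
    {ε : ℝ} (hε : 0 < ε) :
    ∃ δ > 0, ∀ x : E, N (x - p) < δ → N (f x - p - α (x - p)) ≤ ε * N (x - p) := by
  have hev := hα.isLittleO.def (show (0:ℝ) < ε * c / C by positivity)
  rw [Metric.eventually_nhds_iff] at hev
  obtain ⟨δ, hδ, hd⟩ := hev
  refine ⟨c * δ, by positivity, fun x hx => ?_⟩
  have h2 := (hbound (x - p)).1
  have hxp : ‖x - p‖ < δ := by nlinarith
  have hr := hd (show dist x p < δ by rwa [dist_eq_norm])
  rw [hfp] at hr
  have h1 := (hbound (f x - p - α (x - p))).2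
  have hnn : (0:ℝ) ≤ ‖f x - p - α (x - p)‖ := norm_nonneg _
  calc N (f x - p - α (x - p)) ≤ C * ‖f x - p - α (x - p)‖ := h1
    _ ≤ C * (ε * c / C * ‖x - p‖) := by nlinarith
    _ = ε * (c * ‖x - p‖) := by field_simp
    _ ≤ ε * N (x - p) := by nlinarith

/-- If the derivative is a contraction for an equivalent ultrametric norm, then the fixed
point is uniformly attractive. -/
lemma uniformlyAttractive_of_contraction {U : Set E} (hU : IsOpen U)
    {f : E → E} {p : E} (hp : p ∈ U) (hfp : f p = p)
    {α : E →L[K] E} (hα : HasFDerivAt f α p)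
    {N : E → ℝ} (hN : IsUltraNorm K N) (hNt : DefinesTopology N)
    {b : ℝ} (hb1 : b < 1) (hb : ∀ x : E, N (α x) ≤ b * N x) :
    UniformlyAttractive U f p := by
  obtain ⟨c, hc, C, hC, hbound⟩ := hNt
  set b₀ : ℝ := max b (1/2) with hb₀def
  have hb₀0 : (0:ℝ) < b₀ := lt_of_lt_of_le (by norm_num) (le_max_right _ _)
  have hb₀1 : b₀ < 1 := max_lt hb1 (by norm_num)
  have hb' : ∀ x : E, N (α x) ≤ b₀ * N x := fun x =>
    (hb x).trans (mul_le_mul_of_nonneg_right (le_max_left _ _) (hN.1 x))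
  obtain ⟨δ₁, hδ₁, hkey⟩ := key_estimate hα hfp hc hC hbound hb₀0
  obtain ⟨ρ, hρ, hball⟩ := Metric.isOpen_iff.mp hU p hp
  set δ : ℝ := min δ₁ (c * ρ) with hδdef
  have hδ : 0 < δ := lt_min hδ₁ (by positivity)
  have hBU : ∀ x : E, N (x - p) < δ → x ∈ U := by
    intro x hx
    apply hball
    rw [Metric.mem_ball, dist_eq_norm]
    have h1 := (hbound (x - p)).1
    have h2 : N (x - p) < c * ρ := lt_of_lt_of_le hx (min_le_right _ _)
    nlinarith
  have hnhds : ∀ r : ℝ, 0 < r → {x : E | N (x - p) < r} ∈ 𝓝 p := by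
    intro r hr
    apply Filter.mem_of_superset (Metric.ball_mem_nhds p (show 0 < r / C by positivity))
    intro x hx
    rw [Metric.mem_ball, dist_eq_norm] at hx
    have h1 := (hbound (x - p)).2
    simp only [Set.mem_setOf_eq]
    calc N (x - p) ≤ C * ‖x - p‖ := h1
      _ < C * (r / C) := by nlinarith
      _ = r := by field_simp
  have hcontr : ∀ x : E, N (x - p) < δ → N (f x - p) ≤ b₀ * N (x - p) := by
    intro x hx
    have hr := hkey x (lt_of_lt_of_le hx (min_le_left _ _))
    have heq : f x - p = α (x - p) + (f x - p - α (x - p)) := by abel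
    rw [heq]
    exact (hN.2.2.2 _ _).trans (max_le (hb' _) hr)
  have hmaps : ∀ r : ℝ, r ≤ δ → ∀ x : E, N (x - p) < r → N (f x - p) < r := by
    intro r hrδ x hx
    have h1 := hcontr x (lt_of_lt_of_le hx hrδ)
    have hnn := hN.1 (x - p)
    nlinarith
  have horb : ∀ x : E, N (x - p) < δ → ∀ n : ℕ,
      N (f^[n] x - p) ≤ b₀ ^ n * N (x - p) ∧ N (f^[n] x - p) < δ := by
    intro x hx n
    induction n with
    | zero =>
      simp only [Function.iterate_zero_apply, pow_zero, one_mul]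
      exact ⟨le_rfl, hx⟩
    | succ n ih =>
      rw [Function.iterate_succ_apply']
      have h1 := hcontr _ ih.2
      have hnn := hN.1 (f^[n] x - p)
      have hnn2 := hN.1 (x - p)
      have hpow : (0:ℝ) ≤ b₀ ^ n := pow_nonneg hb₀0.le n
      constructor
      · calc N (f (f^[n] x) - p) ≤ b₀ * N (f^[n] x - p) := h1
          _ ≤ b₀ * (b₀ ^ n * N (x - p)) := by nlinarith [ih.1]
          _ = b₀ ^ (n + 1) * N (x - p) := by ring
      · nlinarith [ih.2]
  constructor
  · refine ⟨{x : E | N (x - p) < δ}, fun x hx => hBU x hx, hnhds δ hδ, ?_, ?_⟩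
    · intro x hx n
      exact hBU _ (horb x hx n).2
    · intro x hx
      rw [tendsto_iff_norm_sub_tendsto_zero]
      have hlim : Tendsto (fun n : ℕ => N (x - p) / c * b₀ ^ n) atTop (𝓝 0) := by
        have := (tendsto_pow_atTop_nhds_zero_of_lt_one hb₀0.le hb₀1).const_mul
          (N (x - p) / c)
        simpa using this
      refine squeeze_zero (fun n => norm_nonneg _) (fun n => ?_) hlim
      have h1 := (hbound (f^[n] x - p)).1
      have h2 := (horb x hx n).1
      rw [div_mul_eq_mul_div, le_div_iff₀ hc]
      nlinarith
  · intro P hPU hPn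
    obtain ⟨ρ', hρ', hball'⟩ := Metric.mem_nhds_iff.mp hPn
    set r : ℝ := min δ (c * ρ') with hrdef
    have hr : 0 < r := lt_min hδ (by positivity)
    refine ⟨{x : E | N (x - p) < r}, ?_, hnhds r hr, ?_⟩
    · intro x hx
      apply hball'
      rw [Metric.mem_ball, dist_eq_norm]
      have h1 := (hbound (x - p)).1
      have h2 : N (x - p) < c * ρ' := lt_of_lt_of_le hx (min_le_right _ _)
      nlinarith
    · intro x hx
      exact hmaps r (min_le_left _ _) x hx

end Aux

/-- For an analytic map `f` on an open subset of an ultrametric Banach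
space, with fixed point `p` whose differential `α = f'(p)` is a bicontinuous automorphism:
`E` has a centre subspace (with `a = 1`) for `α` and `p` is uniformly attractive, if and
only if `α` has operator norm `< 1` for some ultrametric norm defining the topology. -/
theorem centre_subspace_and_uniformly_attractive_iff_opNorm_lt_one
    {K : Type*} [NontriviallyNormedField K] [IsUltrametricDist K] [CompleteSpace K]
    {E : Type*} [NormedAddCommGroup E] [NormedSpace K E] [IsUltrametricDist E]
    [CompleteSpace E]
    {U : Set E} (hU : IsOpen U) {f : E → E} (hf : AnalyticOnNhd K f U)
    {p : E} (hp : p ∈ U) (hfp : f p = p)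
    (α : E ≃L[K] E) (hα : HasFDerivAt f (α : E →L[K] E) p) :
    ((∃ (Es Ec Eu : Submodule K E) (N : E → ℝ),
        (∀ x ∈ Es, α x ∈ Es) ∧ (∀ x ∈ Ec, α x ∈ Ec) ∧ (∀ x ∈ Eu, α x ∈ Eu) ∧
        Disjoint Es (Ec ⊔ Eu) ∧ Disjoint Ec Eu ∧ Es ⊔ Ec ⊔ Eu = ⊤ ∧
        Set.BijOn ⇑α (Eu : Set E) (Eu : Set E) ∧
        IsUltraNorm K N ∧ DefinesTopology N ∧
        (∀ x ∈ Es, ∀ y ∈ Ec, ∀ z ∈ Eu, N (x + y + z) = max (N x) (max (N y) (N z))) ∧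
        (∀ y ∈ Ec, N (α y) = N y) ∧
        (∃ b, b < 1 ∧ ∀ x ∈ Es, N (α x) ≤ b * N x) ∧
        (∃ b, 1 < b ∧ ∀ z ∈ Eu, b * N z ≤ N (α z))) ∧
      UniformlyAttractive U f p)
    ↔ ∃ N : E → ℝ, IsUltraNorm K N ∧ DefinesTopology N ∧
        ∃ b, b < 1 ∧ ∀ x : E, N (α x) ≤ b * N x := by
  constructor
  · rintro ⟨⟨Es, Ec, Eu, N, hEs, hEc, hEu, -, -, hsup, -, hN, hNt, hmax, hbc,
      ⟨bs, hbs1, hbs⟩, ⟨bu, hbu1, hbu⟩⟩, ⟨P₀, hP₀U, hP₀n, -, hP₀conv⟩, hUA2⟩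
    refine ⟨N, hN, hNt, bs, hbs1, ?_⟩
    obtain ⟨c, hc, C, hC, hbound⟩ := hNt
    -- remainder estimate with ε = 1/2
    obtain ⟨δ, hδ, hkey⟩ := key_estimate hα hfp hc hC hbound (show (0:ℝ) < 1/2 by norm_num)
    -- neighbourhood mapped into itself inside the δ-ball
    have hnhds : ∀ r : ℝ, 0 < r → {x : E | N (x - p) < r} ∈ 𝓝 p := by
      intro r hr
      apply Filter.mem_of_superset (Metric.ball_mem_nhds p (show 0 < r / C by positivity))
      intro x hx
      rw [Metric.mem_ball, dist_eq_norm] at hx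
      have h1 := (hbound (x - p)).2
      simp only [Set.mem_setOf_eq]
      calc N (x - p) ≤ C * ‖x - p‖ := h1
        _ < C * (r / C) := by nlinarith
        _ = r := by field_simp
    obtain ⟨Q, hQP, hQn, hQmaps⟩ := hUA2 ({x : E | N (x - p) < δ} ∩ U)
      (Set.inter_subset_right) (Filter.inter_mem (hnhds δ hδ) (hU.mem_nhds hp))
    -- main claim: centre-unstable vectors near p must vanish
    have claim : ∀ v : E, v ∈ Ec ⊔ Eu → p + v ∈ Q → p + v ∈ P₀ → v = 0 := by
      intro v hv hvQ hvP₀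
      by_contra hv0
      obtain ⟨y, hy, z, hz, hyz⟩ := Submodule.mem_sup.mp hv
      have hNv : 0 < N v := lt_of_le_of_ne (hN.1 v) (fun h => hv0 ((hN.2.1 v).mp h.symm))
      have hM₀ : N v = max (N y) (N z) := by
        have h := hmax 0 (Submodule.zero_mem Es) y hy z hz
        rw [zero_add, hyz, hN.zero'] at h
        rw [h]
        exact max_eq_right (le_max_of_le_left (hN.1 y))
      set M₀ : ℝ := max (N y) (N z) with hM₀def
      -- orbit stays in Q
      have horbQ : ∀ n : ℕ, f^[n] (p + v) ∈ Q := fun n =>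
        (hQmaps.iterate n) hvQ
      -- the invariant
      have hinv : ∀ n : ℕ, ∃ x' y' z', x' ∈ Es ∧ y' ∈ Ec ∧ z' ∈ Eu ∧
          f^[n] (p + v) - p = x' + y' + z' ∧
          N x' ≤ max (N y') (N z') ∧ M₀ ≤ max (N y') (N z') := by
        intro n
        induction n with
        | zero =>
          refine ⟨0, y, z, Submodule.zero_mem _, hy, hz, ?_, ?_, le_rfl⟩
          · simp [hyz]
          · rw [hN.zero']
            exact le_max_of_le_left (hN.1 y)
        | succ n ih =>
          obtain ⟨x', y', z', hx'm, hy'm, hz'm, hw, hx', hM⟩ := ih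
          set w : E := f^[n] (p + v) - p with hwdef
          have hpw : p + w = f^[n] (p + v) := by rw [hwdef]; abel
          set M : ℝ := max (N y') (N z') with hMdef
          have hMpos : 0 < M := lt_of_lt_of_le (lt_of_lt_of_le hNv (le_of_eq hM₀)) hM
          -- N w = M and N w < δ
          have hNw : N w = M := by
            rw [hw, hmax x' hx'm y' hy'm z' hz'm]
            exact max_eq_right hx'
          have hwδ : N w < δ := by
            have h1 := hQP (horbQ n)
            have h2 : f^[n] (p + v) ∈ {x : E | N (x - p) < δ} := h1.1
            rw [Set.mem_setOf_eq, ← hwdef] at h2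
            exact h2
          -- remainder
          set r : E := f (p + w) - p - α w with hrdef
          have hNr : N r ≤ 1/2 * N w := by
            have h := hkey (p + w) (by rwa [add_sub_cancel_left])
            rw [add_sub_cancel_left] at h
            rw [hrdef]
            simpa using h
          have hNrM : N r < M := by
            rw [hNw] at hNr
            nlinarith
          -- decompose r
          obtain ⟨su, hsu, ru, hru, hr1⟩ := Submodule.mem_sup.mp
            (show r ∈ (Es ⊔ Ec) ⊔ Eu by rw [hsup]; trivial)
          obtain ⟨rs, hrs, rc, hrc, hr2⟩ := Submodule.mem_sup.mp hsu
          have hrdec : r = rs + rc + ru := by rw [← hr1, ← hr2]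
          have hNrparts : N rs ≤ N r ∧ N rc ≤ N r ∧ N ru ≤ N r := by
            have h := hmax rs hrs rc hrc ru hru
            rw [← hrdec] at h
            refine ⟨?_, ?_, ?_⟩ <;> rw [h]
            · exact le_max_left _ _
            · exact le_max_of_le_right (le_max_left _ _)
            · exact le_max_of_le_right (le_max_right _ _)
          -- next iterate
          have hnext : f^[n+1] (p + v) - p = (α x' + rs) + (α y' + rc) + (α z' + ru) := by
            rw [Function.iterate_succ_apply', ← hpw]
            have hfw : f (p + w) - p = α w + r := by rw [hrdef]; abel
            rw [hfw, hw, map_add, map_add, hrdec]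
            abel
          refine ⟨α x' + rs, α y' + rc, α z' + ru,
            Submodule.add_mem _ (hEs x' hx'm) hrs,
            Submodule.add_mem _ (hEc y' hy'm) hrc,
            Submodule.add_mem _ (hEu z' hz'm) hru, hnext, ?_, ?_⟩
          -- bound on stable part : N (α x' + rs) ≤ M ≤ new M
          · have hαx' : N (α x') ≤ N x' := by
              have h1 := hbs x' hx'm
              have h2 : bs * N x' ≤ 1 * N x' :=
                mul_le_mul_of_nonneg_right hbs1.le (hN.1 x')
              linarith [h1, h2]
            have hs : N (α x' + rs) ≤ M :=
              (hN.2.2.2 _ _).trans (max_le (hαx'.trans hx') (hNrparts.1.trans hNrM.le))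
            -- new centre-unstable norm is ≥ M
            have hMM : M ≤ max (N (α y' + rc)) (N (α z' + ru)) := by
              rcases le_total (N z') (N y') with hcase | hcase
              · -- centre part dominates : N y' = M
                have hy'M : N y' = M := (max_eq_left hcase).symm
                have hαy' : N (α y') = N y' := hbc y' hy'm
                have : N (α y' + rc) = N (α y') := by
                  apply hN.add_eq_left
                  rw [hαy', hy'M]
                  exact lt_of_le_of_lt hNrparts.2.1 hNrM
                rw [this, hαy', hy'M]
                exact le_max_left _ _
              · -- unstable part dominates : N z' = M
                have hz'M : N z' = M := (max_eq_right hcase).symm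
                have hαz' : bu * N z' ≤ N (α z') := hbu z' hz'm
                have hbuM : M < bu * M := by nlinarith
                have : N (α z' + ru) = N (α z') := by
                  apply hN.add_eq_left
                  calc N ru ≤ N r := hNrparts.2.2
                    _ < M := hNrM
                    _ < bu * M := hbuM
                    _ = bu * N z' := by rw [hz'M]
                    _ ≤ N (α z') := hαz'
                rw [this]
                refine le_max_of_le_right ?_
                calc M ≤ bu * M := hbuM.le
                  _ = bu * N z' := by rw [hz'M]
                  _ ≤ N (α z') := hαz'
            exact hs.trans hMM
          · -- M₀ ≤ new centre-unstable norm (same as above)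
            have hMM : M ≤ max (N (α y' + rc)) (N (α z' + ru)) := by
              rcases le_total (N z') (N y') with hcase | hcase
              · have hy'M : N y' = M := (max_eq_left hcase).symm
                have hαy' : N (α y') = N y' := hbc y' hy'm
                have : N (α y' + rc) = N (α y') := by
                  apply hN.add_eq_left
                  rw [hαy', hy'M]
                  exact lt_of_le_of_lt hNrparts.2.1 hNrM
                rw [this, hαy', hy'M]
                exact le_max_left _ _
              · have hz'M : N z' = M := (max_eq_right hcase).symm
                have hαz' : bu * N z' ≤ N (α z') := hbu z' hz'm
                have hbuM : M < bu * M := by nlinarith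
                have : N (α z' + ru) = N (α z') := by
                  apply hN.add_eq_left
                  calc N ru ≤ N r := hNrparts.2.2
                    _ < M := hNrM
                    _ < bu * M := hbuM
                    _ = bu * N z' := by rw [hz'M]
                    _ ≤ N (α z') := hαz'
                rw [this]
                refine le_max_of_le_right ?_
                calc M ≤ bu * M := hbuM.le
                  _ = bu * N z' := by rw [hz'M]
                  _ ≤ N (α z') := hαz'
            exact hM.trans hMM
      --每 iterate has N (f^[n](p+v) - p) ≥ M₀ > 0, contradicting convergence
      have hlow : ∀ n : ℕ, M₀ ≤ N (f^[n] (p + v) - p) := by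
        intro n
        obtain ⟨x', y', z', hx'm, hy'm, hz'm, hw, hx', hM⟩ := hinv n
        rw [hw, hmax x' hx'm y' hy'm z' hz'm]
        exact hM.trans (le_max_of_le_right le_rfl)
      have hconv := hP₀conv (p + v) hvP₀
      have hM₀pos : 0 < M₀ := lt_of_lt_of_le hNv (le_of_eq hM₀)
      have hev : ∀ᶠ n in atTop, f^[n] (p + v) ∈ {x : E | N (x - p) < M₀} :=
        hconv.eventually_mem (hnhds M₀ hM₀pos)
      obtain ⟨n, hn⟩ := hev.exists
      exact absurd (hlow n) (not_le.mpr hn)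
    -- conclude: every element of Ec ⊔ Eu is zero
    have hcu : ∀ u : E, u ∈ Ec ⊔ Eu → u = 0 := by
      intro u hu
      by_contra hu0
      obtain ⟨s, hs0, hs1⟩ := NormedField.exists_norm_lt_one K
      have hsne : s ≠ 0 := fun h => by simp [h] at hs0
      have htends : Tendsto (fun n : ℕ => p + s ^ n • u) atTop (𝓝 p) := by
        have h1 : Tendsto (fun n : ℕ => s ^ n) atTop (𝓝 (0:K)) :=
          tendsto_pow_atTop_nhds_zero_of_norm_lt_one hs1
        have h2 : Tendsto (fun n : ℕ => s ^ n • u) atTop (𝓝 (0:E)) := by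
          simpa using h1.smul_const u
        simpa using tendsto_const_nhds.add h2
      have hev : ∀ᶠ n in atTop, p + s ^ n • u ∈ Q ∩ P₀ :=
        htends.eventually_mem (Filter.inter_mem hQn hP₀n)
      obtain ⟨n, hn⟩ := hev.exists
      have := claim (s ^ n • u) (Submodule.smul_mem _ _ hu) hn.1 hn.2
      rcases smul_eq_zero.mp this with h | h
      · exact pow_ne_zero n hsne h
      · exact hu0 h
    -- hence every x decomposes as a stable vector
    intro x
    have hx : x ∈ (Es ⊔ Ec) ⊔ Eu := by rw [hsup]; trivial
    obtain ⟨su, hsu, zu, hzu, hx1⟩ := Submodule.mem_sup.mp hx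
    obtain ⟨xs, hxs, yc, hyc, hx2⟩ := Submodule.mem_sup.mp hsu
    have hcu0 : yc + zu = 0 := hcu (yc + zu)
      (Submodule.add_mem _ (Submodule.mem_sup_left hyc) (Submodule.mem_sup_right hzu))
    have hxeq : x = xs := by
      rw [← hx1, ← hx2]
      rw [add_assoc, hcu0, add_zero]
    rw [hxeq]
    exact hbs xs hxs
  · rintro ⟨N, hN, hNt, b, hb1, hb⟩
    constructor
    · refine ⟨⊤, ⊥, ⊥, N, fun x _ => trivial, ?_, ?_, ?_, ?_, by simp, ?_, hN, hNt,
        ?_, ?_, ⟨b, hb1, fun x _ => hb x⟩, ⟨2, by norm_num, ?_⟩⟩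
      · intro x hx
        rw [Submodule.mem_bot] at hx ⊢
        rw [hx, map_zero]
      · intro x hx
        rw [Submodule.mem_bot] at hx ⊢
        rw [hx, map_zero]
      · simpa using disjoint_bot_right
      · exact disjoint_bot_right
      · constructor
        · intro x hx
          rw [SetLike.mem_coe, Submodule.mem_bot] at hx ⊢
          rw [hx, map_zero]
        constructor
        · intro x hx y hy hxy
          rw [SetLike.mem_coe, Submodule.mem_bot] at hx hy
          rw [hx, hy]
        · intro x hx
          rw [SetLike.mem_coe, Submodule.mem_bot] at hx
          exact ⟨0, by simp, by rw [map_zero, hx]⟩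
      · intro x _ y hy z hz
        rw [Submodule.mem_bot] at hy hz
        rw [hy, hz, add_zero, add_zero, hN.zero']
        rw [max_self]
        exact (max_eq_left (hN.1 x)).symm
      · intro y hy
        rw [Submodule.mem_bot] at hy
        rw [hy, map_zero]
      · intro z hz
        rw [Submodule.mem_bot] at hz
        rw [hz, map_zero, hN.zero']
        norm_num
    · exact uniformlyAttractive_of_contraction hU hp hfp hα hN hNt hb1
        (fun x => by simpa using hb x)
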